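/- Let $A, B \in M_5(\mathbb{C})$ satisfy $\operatorname{rank}(A:B) = 5$ and $A C_5 A^* = B C_5 B^*$, where $(A:B)$ denotes the $5\times 10$ matrix formed by concatenating $A$ and $B$, and $C_5 = ((-1)^r\delta_{r,6-s})_{r,s=1}^5$. Then $3 \le \operatorname{rank} A \le 5$ and $3 \le \operatorname{rank} B \le 5$. -/

import Mathlib

open Matrix

/-- The `5 × 5` symplectic matrix with 1-based entries `(-1)^r δ_{r, 6-s}`. -/
noncomputable def C5 : Matrix (Fin 5) (Fin 5) ℂ :=
  Matrix.of fun r s => if r.val + s.val = 4 then ((-1 : ℂ)) ^ (r.val + 1) else 0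

/-- Vectors in the "negative" subspace on which the Hermitian form given by `C5`
vanishes must be zero. -/
lemma C5_key (u : Fin 5 → ℂ) (h : u ⬝ᵥ C5 *ᵥ star u = 0)
    (h4 : u 4 = u 0) (h3 : u 3 = -u 1) : u = 0 := by
  have e3 : ((3:Fin 5):ℕ) = 3 := rfl
  have e4 : ((4:Fin 5):ℕ) = 4 := rfl
  simp [C5, mulVec, dotProduct, Fin.sum_univ_five, h4, h3, e3, e4] at h
  have h' : ((Complex.normSq (u 0) * 2 + Complex.normSq (u 1) * 2
      + Complex.normSq (u 2) : ℝ) : ℂ) = 0 := by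
    push_cast
    rw [← Complex.mul_conj, ← Complex.mul_conj, ← Complex.mul_conj]
    linear_combination -h
  rw [Complex.ofReal_eq_zero] at h'
  have h0 : Complex.normSq (u 0) = 0 := by
    nlinarith [Complex.normSq_nonneg (u 0), Complex.normSq_nonneg (u 1),
      Complex.normSq_nonneg (u 2)]
  have h1 : Complex.normSq (u 1) = 0 := by
    nlinarith [Complex.normSq_nonneg (u 0), Complex.normSq_nonneg (u 1),
      Complex.normSq_nonneg (u 2)]
  have h2 : Complex.normSq (u 2) = 0 := by
    nlinarith [Complex.normSq_nonneg (u 0), Complex.normSq_nonneg (u 1),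
      Complex.normSq_nonneg (u 2)]
  rw [Complex.normSq_eq_zero] at h0 h1 h2
  funext i
  fin_cases i <;> simp [h0, h1, h2, h3, h4]

/-- The "negative" subspace, described as the kernel of a map to `ℂ × ℂ`. -/
noncomputable def gmap : (Fin 5 → ℂ) →ₗ[ℂ] ℂ × ℂ :=
  ((LinearMap.proj (4 : Fin 5) : (Fin 5 → ℂ) →ₗ[ℂ] ℂ) - LinearMap.proj 0).prod
    ((LinearMap.proj (3 : Fin 5) : (Fin 5 → ℂ) →ₗ[ℂ] ℂ) + LinearMap.proj 1)

lemma rank_ge_three (A B : Matrix (Fin 5) (Fin 5) ℂ)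
    (hinj : ∀ x : Fin 5 → ℂ, x ᵥ* A = 0 → x ᵥ* B = 0 → x = 0)
    (hsa : A * C5 * Aᴴ = B * C5 * Bᴴ) : 3 ≤ A.rank := by
  classical
  -- scalar fact
  have scalar : ∀ x : Fin 5 → ℂ, x ᵥ* A = 0 →
      (x ᵥ* B) ⬝ᵥ C5 *ᵥ star (x ᵥ* B) = 0 := by
    intro x hx
    have h1 : x ⬝ᵥ (A * C5 * Aᴴ) *ᵥ star x = 0 := by
      rw [dotProduct_mulVec, ← vecMul_vecMul, ← vecMul_vecMul, hx]
      simp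
    rw [hsa, dotProduct_mulVec, ← vecMul_vecMul, ← vecMul_vecMul] at h1
    rw [dotProduct_mulVec]
    calc (x ᵥ* B) ᵥ* C5 ⬝ᵥ star (x ᵥ* B)
        = (x ᵥ* B) ᵥ* C5 ⬝ᵥ (Bᴴ *ᵥ star x) := by rw [star_vecMul]
      _ = x ᵥ* B ᵥ* C5 ᵥ* Bᴴ ⬝ᵥ star x := by rw [dotProduct_mulVec]
      _ = 0 := h1
  have hNmem : ∀ u : Fin 5 → ℂ, u ∈ LinearMap.ker gmap ↔
      (u 4 - u 0 = 0 ∧ u 3 + u 1 = 0) := by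
    intro u
    simp [gmap, LinearMap.mem_ker, Prod.ext_iff]
  have h5 : Module.finrank ℂ (Fin 5 → ℂ) = 5 := by simp
  have hNrank : 3 ≤ Module.finrank ℂ (LinearMap.ker gmap) := by
    have hrn := LinearMap.finrank_range_add_finrank_ker gmap
    have h2 : Module.finrank ℂ (LinearMap.range gmap) ≤ 2 := by
      have := Submodule.finrank_le (LinearMap.range gmap)
      simpa using this
    omega
  set K := LinearMap.ker (Aᵀ.mulVecLin) with hK
  set ψ := Bᵀ.mulVecLin with hψ
  have hinj' : Function.Injective (ψ.domRestrict K) := by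
    rw [← LinearMap.ker_eq_bot, Submodule.eq_bot_iff]
    rintro ⟨x, hxK⟩ hx
    have hxA : x ᵥ* A = 0 := by
      rw [hK, LinearMap.mem_ker, mulVecLin_apply, mulVec_transpose] at hxK
      exact hxK
    have hxB : x ᵥ* B = 0 := by
      have : ψ x = 0 := by simpa [LinearMap.domRestrict] using hx
      rwa [hψ, mulVecLin_apply, mulVec_transpose] at this
    have := hinj x hxA hxB
    simp [this]
  have hWK : Module.finrank ℂ (K.map ψ) = Module.finrank ℂ K := by
    rw [← LinearMap.range_domRestrict]
    exact LinearMap.finrank_range_of_inj hinj'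
  have hWN : (K.map ψ) ⊓ LinearMap.ker gmap = ⊥ := by
    rw [Submodule.eq_bot_iff]
    rintro u ⟨huW, huN⟩
    simp only [SetLike.mem_coe] at huW huN
    obtain ⟨x, hxK, rfl⟩ := huW
    have hxA : x ᵥ* A = 0 := by
      rw [← mulVec_transpose, ← mulVecLin_apply]; exact hxK
    rw [hNmem] at huN
    have hu : ψ x = x ᵥ* B := by rw [hψ, mulVecLin_apply, mulVec_transpose]
    rw [hu] at huN ⊢
    refine C5_key _ (scalar x hxA) ?_ ?_
    · exact sub_eq_zero.mp huN.1
    · exact eq_neg_of_add_eq_zero_left huN.2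
  -- combine dimensions
  have hsum := Submodule.finrank_sup_add_finrank_inf_eq (K.map ψ) (LinearMap.ker gmap)
  rw [hWN] at hsum
  have hle : Module.finrank ℂ ((K.map ψ) ⊔ LinearMap.ker gmap : Submodule ℂ (Fin 5 → ℂ))
      ≤ 5 := by
    have := Submodule.finrank_le ((K.map ψ) ⊔ LinearMap.ker gmap : Submodule ℂ (Fin 5 → ℂ))
    simpa [h5] using this
  have hbot : Module.finrank ℂ (⊥ : Submodule ℂ (Fin 5 → ℂ)) = 0 := finrank_bot ℂ _
  have hKle : Module.finrank ℂ K ≤ 2 := by omega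
  -- rank-nullity for Aᵀ
  have hrnA := LinearMap.finrank_range_add_finrank_ker (Aᵀ.mulVecLin)
  rw [← hK] at hrnA
  have hrA : A.rank = Module.finrank ℂ (LinearMap.range Aᵀ.mulVecLin) := by
    rw [← A.rank_transpose]; rfl
  omega

theorem stmt_2 (A B : Matrix (Fin 5) (Fin 5) ℂ)
    (hrank : (Matrix.fromCols A B).rank = 5)
    (hsa : A * C5 * Aᴴ = B * C5 * Bᴴ) :
    (3 ≤ A.rank ∧ A.rank ≤ 5) ∧ (3 ≤ B.rank ∧ B.rank ≤ 5) := by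
  have hinj : ∀ x : Fin 5 → ℂ, x ᵥ* A = 0 → x ᵥ* B = 0 → x = 0 := by
    intro x hxA hxB
    have hT : (Matrix.fromCols A B)ᵀ.rank = 5 := by
      rw [Matrix.rank_transpose]; exact hrank
    have hrn := LinearMap.finrank_range_add_finrank_ker ((Matrix.fromCols A B)ᵀ.mulVecLin)
    have h5 : Module.finrank ℂ (Fin 5 → ℂ) = 5 := by simp
    have hker0 : Module.finrank ℂ (LinearMap.ker ((Matrix.fromCols A B)ᵀ.mulVecLin)) = 0 := by
      have hrdef : (Matrix.fromCols A B)ᵀ.rank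
          = Module.finrank ℂ (LinearMap.range ((Matrix.fromCols A B)ᵀ.mulVecLin)) := rfl
      omega
    have hbot : LinearMap.ker ((Matrix.fromCols A B)ᵀ.mulVecLin) = ⊥ :=
      Submodule.finrank_eq_zero.mp hker0
    have hxmem : x ∈ LinearMap.ker ((Matrix.fromCols A B)ᵀ.mulVecLin) := by
      rw [LinearMap.mem_ker, mulVecLin_apply, transpose_fromCols, fromRows_mulVec,
        mulVec_transpose, mulVec_transpose, hxA, hxB]
      ext (i | i) <;> rfl
    rw [hbot, Submodule.mem_bot] at hxmem
    exact hxmem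
  have hinj' : ∀ x : Fin 5 → ℂ, x ᵥ* B = 0 → x ᵥ* A = 0 → x = 0 := fun x h1 h2 => hinj x h2 h1
  exact ⟨⟨rank_ge_three A B hinj hsa, A.rank_le_card_height.trans_eq (by simp)⟩,
    ⟨rank_ge_three B A hinj' hsa.symm, B.rank_le_card_height.trans_eq (by simp)⟩⟩
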